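/- If f(z) = Σ aₙzⁿ is subordinate to h(z) = Σ bₙzⁿ in the unit disk, then for every k ≥ 0, Σ_{n=0}^k |aₙ| rⁿ ≤ Σ_{n=0}^k |bₙ| rⁿ for all 0 ≤ r ≤ 1/3. -/

import Mathlib

open Metric Filter Set Finset
open scoped NNReal ENNReal Topology

noncomputable section

namespace BohrAux


/-- bound on coefficients times t^n from summability -/
lemma exists_bound_at {c : ℕ → ℂ} {u : ℂ → ℂ}
    (hc : ∀ z : ℂ, ‖z‖ < 1 → HasSum (fun n => c n * z ^ n) (u z))
    {t : ℝ} (h0 : 0 ≤ t) (h1 : t < 1) :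
    ∃ C : ℝ, 0 ≤ C ∧ ∀ n, ‖c n‖ * t ^ n ≤ C := by
  have hz : ‖((t : ℝ) : ℂ)‖ < 1 := by rwa [Complex.norm_real, Real.norm_eq_abs, abs_of_nonneg h0]
  have hs : Summable fun n => c n * ((t : ℝ) : ℂ) ^ n := (hc _ hz).summable
  have ht : Tendsto (fun n => ‖c n * ((t : ℝ) : ℂ) ^ n‖) atTop (nhds 0) := by
    simpa using hs.tendsto_atTop_zero.norm
  obtain ⟨C, hC⟩ := ht.bddAbove_range
  refine ⟨C, le_trans (norm_nonneg _) (hC ⟨0, rfl⟩), fun n => ?_⟩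
  have := hC (Set.mem_range_self n)
  simpa [norm_mul, norm_pow, Complex.norm_real, Real.norm_eq_abs, abs_of_nonneg h0] using this

lemma series_of_rep {c : ℕ → ℂ} {u : ℂ → ℂ}
    (hc : ∀ z : ℂ, ‖z‖ < 1 → HasSum (fun n => c n * z ^ n) (u z)) :
    ∀ ρ : ℝ≥0, 0 < ρ → (ρ : ℝ) < 1 →
      HasFPowerSeriesOnBall u (FormalMultilinearSeries.ofScalars ℂ c) 0 ρ := by
  intro ρ hρ0 hρ1
  obtain ⟨C, hC0, hC⟩ := exists_bound_at hc (t := (1 + ρ) / 2)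
    (by positivity) (by linarith)
  refine ⟨?_, by exact_mod_cast hρ0, ?_⟩
  · refine FormalMultilinearSeries.le_radius_of_bound _ C fun n => ?_
    rw [FormalMultilinearSeries.ofScalars_norm]
    calc ‖c n‖ * (ρ : ℝ) ^ n ≤ ‖c n‖ * (((1:ℝ) + ρ) / 2) ^ n := by
          gcongr; linarith [ρ.coe_nonneg]
      _ ≤ C := hC n
  · intro y hy
    rw [EMetric.mem_ball, edist_zero_right] at hy
    have hy1 : ‖y‖ < 1 := by
      have : (‖y‖₊ : ℝ) < (ρ : ℝ) := by exact_mod_cast hy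
      calc ‖y‖ = (‖y‖₊ : ℝ) := by simp
        _ < 1 := lt_trans this hρ1
    simp only [FormalMultilinearSeries.ofScalars_apply_eq, smul_eq_mul, zero_add]
    exact (hc y hy1).congr_fun fun n => by ring

lemma hasSum_of_series {u : ℂ → ℂ} {p : FormalMultilinearSeries ℂ ℂ ℂ}
    (hp : ∀ ρ : ℝ≥0, 0 < ρ → (ρ : ℝ) < 1 → HasFPowerSeriesOnBall u p 0 ρ)
    {z : ℂ} (hz : ‖z‖ < 1) :
    HasSum (fun n => p.coeff n * z ^ n) (u z) := by
  set t : ℝ := (1 + ‖z‖) / 2 with ht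
  have h0 : (0:ℝ) < t := by positivity
  set ρ : ℝ≥0 := ⟨t, h0.le⟩ with hρdef
  have hρc : (ρ : ℝ) = t := rfl
  have hρ0 : 0 < ρ := by rw [← NNReal.coe_lt_coe, hρc, NNReal.coe_zero]; exact h0
  have h1 : (ρ : ℝ) < 1 := by rw [hρc]; simp only [ht]; linarith
  have hzt : ‖z‖ < t := by simp only [ht]; linarith
  have hmem : z ∈ Metric.eball (0:ℂ) ρ := by
    rw [EMetric.mem_ball, edist_zero_right]
    have : (‖z‖₊ : ℝ≥0) < ρ := by
      rw [← NNReal.coe_lt_coe, coe_nnnorm, hρc]; exact hzt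
    exact_mod_cast this
  have h := (hp ρ hρ0 h1).hasSum hmem
  have heq : ∀ n, (p n fun _ => z) = p.coeff n * z ^ n := by
    intro n
    rw [FormalMultilinearSeries.apply_eq_pow_smul_coeff, smul_eq_mul, mul_comm]
  rw [zero_add] at h
  exact (h.congr_fun fun n => (heq n).symm)

lemma exists_series {u : ℂ → ℂ} (hu : DifferentiableOn ℂ u (ball (0:ℂ) 1)) :
    ∃ p : FormalMultilinearSeries ℂ ℂ ℂ,
      ∀ ρ : ℝ≥0, 0 < ρ → (ρ : ℝ) < 1 → HasFPowerSeriesOnBall u p 0 ρ := by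
  set R0 : ℝ≥0 := 2⁻¹ with hR0
  have hR0pos : 0 < R0 := by
    rw [← NNReal.coe_lt_coe, NNReal.coe_zero, hR0]; norm_num
  have hR0lt : (R0 : ℝ) < 1 := by rw [hR0]; norm_num
  have hhalf : HasFPowerSeriesOnBall u (cauchyPowerSeries u 0 (R0:ℝ)) 0 R0 := by
    refine DifferentiableOn.hasFPowerSeriesOnBall ?_ hR0pos
    exact hu.mono (closedBall_subset_ball hR0lt)
  refine ⟨cauchyPowerSeries u 0 (R0:ℝ), fun ρ hρ0 hρ1 => ?_⟩
  have hρ : HasFPowerSeriesOnBall u (cauchyPowerSeries u 0 ρ) 0 ρ := by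
    refine DifferentiableOn.hasFPowerSeriesOnBall ?_ hρ0
    exact hu.mono (closedBall_subset_ball hρ1)
  exact hhalf.exchange_radius hρ



lemma mem_emetric_of_norm_lt {z : ℂ} {ρ : ℝ≥0} (h : ‖z‖ < (ρ:ℝ)) :
    z ∈ Metric.eball (0:ℂ) ρ := by
  rw [EMetric.mem_ball, edist_zero_right]
  have : (‖z‖₊ : ℝ≥0) < ρ := by rw [← NNReal.coe_lt_coe, coe_nnnorm]; exact h
  exact_mod_cast this

lemma diffOn_of_series {u : ℂ → ℂ} {p : FormalMultilinearSeries ℂ ℂ ℂ}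
    (hp : ∀ ρ : ℝ≥0, 0 < ρ → (ρ : ℝ) < 1 → HasFPowerSeriesOnBall u p 0 ρ)
    {ρ : ℝ} (h0 : 0 < ρ) (h1 : ρ < 1) :
    DifferentiableOn ℂ u (closedBall (0:ℂ) ρ) := by
  have ht0 : (0:ℝ) < (1+ρ)/2 := by positivity
  set ρ' : ℝ≥0 := ⟨(1+ρ)/2, ht0.le⟩ with hρ'
  have hc : (ρ' : ℝ) = (1+ρ)/2 := rfl
  have h := hp ρ' (by rw [← NNReal.coe_lt_coe, NNReal.coe_zero, hc]; exact ht0)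
    (by rw [hc]; linarith)
  intro z hz
  rw [mem_closedBall, dist_zero_right] at hz
  have hz' : z ∈ Metric.eball (0:ℂ) ρ' := mem_emetric_of_norm_lt (by rw [hc]; linarith)
  exact ((h.analyticAt_of_mem hz').differentiableAt).differentiableWithinAt

lemma contOn_of_series {u : ℂ → ℂ} {p : FormalMultilinearSeries ℂ ℂ ℂ}
    (hp : ∀ ρ : ℝ≥0, 0 < ρ → (ρ : ℝ) < 1 → HasFPowerSeriesOnBall u p 0 ρ)
    {ρ : ℝ} (h0 : 0 < ρ) (h1 : ρ < 1) :
    ContinuousOn u (closedBall (0:ℂ) ρ) :=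
  (diffOn_of_series hp h0 h1).continuousOn

/-- Cauchy estimate for the coefficients of a function bounded by `C` on the unit ball. -/
lemma coeff_le {u : ℂ → ℂ} {p : FormalMultilinearSeries ℂ ℂ ℂ}
    (hp : ∀ ρ : ℝ≥0, 0 < ρ → (ρ : ℝ) < 1 → HasFPowerSeriesOnBall u p 0 ρ)
    {C : ℝ} (hC : 0 ≤ C) (hb : ∀ z : ℂ, ‖z‖ < 1 → ‖u z‖ ≤ C) (n : ℕ) :
    ‖p.coeff n‖ ≤ C := by
  have key : ∀ ρ : ℝ, ρ ∈ Ioo (0:ℝ) 1 → ‖p.coeff n‖ * ρ ^ n ≤ C := by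
    rintro ρ ⟨h0, h1⟩
    set ρ' : ℝ≥0 := ⟨ρ, h0.le⟩ with hρ'
    have hc : (ρ' : ℝ) = ρ := rfl
    have h0' : 0 < ρ' := by rw [← NNReal.coe_lt_coe, NNReal.coe_zero, hc]; exact h0
    have h1' : (ρ' : ℝ) < 1 := by rw [hc]; exact h1
    -- p equals the Cauchy power series at radius ρ
    have hcauchy : HasFPowerSeriesOnBall u (cauchyPowerSeries u 0 (ρ':ℝ)) 0 ρ' :=
      DifferentiableOn.hasFPowerSeriesOnBall
        (diffOn_of_series hp (by exact_mod_cast h0') h1') h0'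
    have hpp : p = cauchyPowerSeries u 0 (ρ':ℝ) :=
      (hp ρ' h0' h1').hasFPowerSeriesAt.eq_formalMultilinearSeries
        hcauchy.hasFPowerSeriesAt
    -- bound for the Cauchy power series
    have hnorm : ‖cauchyPowerSeries u 0 (ρ':ℝ) n‖ ≤ C * |(ρ:ℝ)|⁻¹ ^ n := by
      refine le_trans (norm_cauchyPowerSeries_le u 0 (ρ':ℝ) n) ?_
      have hint : (∫ θ : ℝ in (0)..2 * Real.pi, ‖u (circleMap 0 (ρ':ℝ) θ)‖) ≤
          2 * Real.pi * C := by
        have hcont : Continuous fun θ : ℝ => ‖u (circleMap 0 (ρ':ℝ) θ)‖ := by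
          have hmaps : ∀ θ : ℝ, circleMap 0 (ρ':ℝ) θ ∈ closedBall (0:ℂ) ρ := by
            intro θ
            rw [mem_closedBall, dist_zero_right]
            have : ‖circleMap 0 (ρ':ℝ) θ‖ = |(ρ':ℝ)| := by rw [norm_circleMap_zero]
            rw [this, hc, abs_of_pos h0]
          exact ((contOn_of_series hp h0 h1).comp_continuous
            (continuous_circleMap 0 (ρ':ℝ)) hmaps).norm
        calc (∫ θ : ℝ in (0)..2 * Real.pi, ‖u (circleMap 0 (ρ':ℝ) θ)‖)
            ≤ ∫ _ : ℝ in (0)..2 * Real.pi, C := by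
              refine intervalIntegral.integral_mono_on Real.two_pi_pos.le
                (hcont.intervalIntegrable _ _) (intervalIntegrable_const) ?_
              intro θ _
              refine hb _ ?_
              have : ‖circleMap 0 (ρ':ℝ) θ‖ = |(ρ':ℝ)| := by rw [norm_circleMap_zero]
              rw [this, hc, abs_of_pos h0]; exact h1
          _ = 2 * Real.pi * C := by simp [mul_comm]
      have h2pi : (0:ℝ) < (2 * Real.pi)⁻¹ := by positivity
      have : (2 * Real.pi)⁻¹ * (∫ θ : ℝ in (0)..2 * Real.pi, ‖u (circleMap 0 (ρ':ℝ) θ)‖)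
          ≤ (2 * Real.pi)⁻¹ * (2 * Real.pi * C) := by
        exact mul_le_mul_of_nonneg_left hint h2pi.le
      have heq : (2 * Real.pi)⁻¹ * (2 * Real.pi * C) = C := by field_simp
      rw [heq] at this
      exact mul_le_mul_of_nonneg_right this (by positivity)
    have hcoeff : ‖p.coeff n‖ ≤ ‖p n‖ := by
      rw [FormalMultilinearSeries.coeff]
      refine le_trans ((p n).le_opNorm _) ?_
      simp
    rw [hpp] at hcoeff ⊢
    calc ‖(cauchyPowerSeries u 0 (ρ':ℝ)).coeff n‖ * ρ ^ n
        ≤ (C * |(ρ:ℝ)|⁻¹ ^ n) * ρ ^ n := by gcongr; exact hcoeff.trans hnorm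
      _ = C := by
          rw [abs_of_pos h0]
          field_simp
          rw [one_div_pow, mul_assoc, one_div_mul_cancel (pow_ne_zero n h0.ne'), mul_one]
  -- let ρ → 1
  have htend : Tendsto (fun ρ : ℝ => ‖p.coeff n‖ * ρ ^ n) (nhdsWithin 1 (Iio 1))
      (nhds (‖p.coeff n‖)) := by
    have hco : Continuous fun ρ : ℝ => ‖p.coeff n‖ * ρ ^ n :=
      continuous_const.mul (continuous_pow n)
    have := (hco.tendsto (1:ℝ)).mono_left (nhdsWithin_le_nhds (s := Iio (1:ℝ)))
    simpa using this
  refine le_of_tendsto htend ?_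
  filter_upwards [Ioo_mem_nhdsLT_of_mem (show (1:ℝ) ∈ Ioc (0:ℝ) 1 by constructor <;> norm_num)]
    with ρ hρ using key ρ hρ



lemma mobius_bound {x y : ℂ} (hx : ‖x‖ ≤ 1) (hy : ‖y‖ ≤ 1) :
    ‖x - y‖ ≤ ‖1 - (starRingEnd ℂ) y * x‖ := by
  have hx' : x.re ^ 2 + x.im ^ 2 ≤ 1 := by
    have := Complex.normSq_eq_norm_sq x ▸ (pow_le_one₀ (norm_nonneg x) hx : ‖x‖ ^ 2 ≤ 1)
    simpa [Complex.normSq_apply, sq] using this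
  have hy' : y.re ^ 2 + y.im ^ 2 ≤ 1 := by
    have := Complex.normSq_eq_norm_sq y ▸ (pow_le_one₀ (norm_nonneg y) hy : ‖y‖ ^ 2 ≤ 1)
    simpa [Complex.normSq_apply, sq] using this
  have key : Complex.normSq (x - y) ≤ Complex.normSq (1 - (starRingEnd ℂ) y * x) := by
    simp only [Complex.normSq_apply, Complex.sub_re, Complex.sub_im, Complex.mul_re,
      Complex.mul_im, Complex.one_re, Complex.one_im, Complex.conj_re, Complex.conj_im]
    nlinarith [mul_nonneg (sub_nonneg.2 hx') (sub_nonneg.2 hy'), sq_nonneg (x.re*y.im - x.im*y.re),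
      sq_nonneg (x.re*y.re + x.im*y.im)]
  have h1 : ‖x - y‖ = Real.sqrt (Complex.normSq (x - y)) := by
    rw [Complex.norm_def]
  have h2 : ‖1 - (starRingEnd ℂ) y * x‖ = Real.sqrt (Complex.normSq (1 - (starRingEnd ℂ) y * x)) := by
    rw [Complex.norm_def]
  rw [h1, h2]
  exact Real.sqrt_le_sqrt key

lemma norm_eq_one_of_pow {t : ℝ} (ht : 0 ≤ t) {m : ℕ} (hm : m ≠ 0) (h : t ^ m = 1) : t = 1 := by
  rcases lt_trichotomy t 1 with hlt | heq | hgt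
  · have := pow_lt_one₀ ht hlt hm
    rw [h] at this; linarith
  · exact heq
  · have := one_lt_pow₀ hgt hm
    rw [h] at this; linarith



lemma wiener {u : ℂ → ℂ} {p : FormalMultilinearSeries ℂ ℂ ℂ}
    (hp : ∀ ρ : ℝ≥0, 0 < ρ → (ρ : ℝ) < 1 → HasFPowerSeriesOnBall u p 0 ρ)
    (hb : ∀ z : ℂ, ‖z‖ < 1 → ‖u z‖ ≤ 1)
    (h0 : ‖p.coeff 0‖ < 1) {m : ℕ} (hm : 1 ≤ m) :
    ‖p.coeff m‖ ≤ 1 - ‖p.coeff 0‖ ^ 2 := by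
  set e : ℕ → ℂ := p.coeff with he_def
  have he : ∀ n, ‖e n‖ ≤ 1 := coeff_le hp zero_le_one hb
  have hm0 : m ≠ 0 := by omega
  -- primitive m-th root of unity
  set ω : ℂ := Complex.exp (2 * Real.pi * Complex.I / m) with hω_def
  have hω : IsPrimitiveRoot ω m := Complex.isPrimitiveRoot_exp m hm0
  have hωm : ω ^ m = 1 := hω.pow_eq_one
  have hωnorm : ‖ω‖ = 1 := by
    refine norm_eq_one_of_pow (norm_nonneg ω) hm0 ?_
    rw [← norm_pow, hωm, norm_one]
  -- the symmetrized series
  set q : FormalMultilinearSeries ℂ ℂ ℂ :=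
    FormalMultilinearSeries.ofScalars ℂ (fun l => e (l * m)) with hq_def
  have hqn : ∀ l, ‖q l‖ = ‖e (l * m)‖ := by
    intro l
    exact FormalMultilinearSeries.ofScalars_norm ℂ (fun l => e (l * m)) l
  have hq_coeff : ∀ l, q.coeff l = e (l * m) := by
    intro l
    have h1 : q.coeff l = (q l) fun _ => (1:ℂ) := rfl
    rw [h1, hq_def, FormalMultilinearSeries.ofScalars_apply_eq]
    simp
  have hqr : 1 ≤ q.radius := by
    refine ENNReal.le_of_forall_nnreal_lt fun r hr => ?_
    have hr1 : (r : ℝ) < 1 := by exact_mod_cast hr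
    refine q.le_radius_of_bound 1 fun n => ?_
    rw [hqn]
    have h1 : (r:ℝ) ^ n ≤ 1 := pow_le_one₀ r.coe_nonneg hr1.le
    have h2 : ‖e (n * m)‖ * (r:ℝ) ^ n ≤ 1 * 1 :=
      mul_le_mul (he (n * m)) h1 (by positivity) zero_le_one
    simpa using h2
  set G : ℂ → ℂ := q.sum with hG_def
  have hG : HasFPowerSeriesOnBall G q 0 1 :=
    (q.hasFPowerSeriesOnBall (lt_of_lt_of_le zero_lt_one hqr)).mono zero_lt_one hqr
  -- `G` has the values of the symmetrized average, so is bounded by 1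
  have hGsum : ∀ w : ℂ, ‖w‖ < 1 → HasSum (fun l => e (l * m) * w ^ l) (G w) := by
    intro w hw
    have hmem : w ∈ Metric.eball (0:ℂ) 1 := by
      have := mem_emetric_of_norm_lt (ρ := 1) (by simpa using hw)
      simpa using this
    have h := hG.hasSum hmem
    rw [zero_add] at h
    refine h.congr_fun fun l => ?_
    rw [hq_def, FormalMultilinearSeries.ofScalars_apply_eq, smul_eq_mul]
  have hGb : ∀ w : ℂ, ‖w‖ < 1 → ‖G w‖ ≤ 1 := by
    intro w hw
    obtain ⟨z, hzm, hz1⟩ : ∃ z : ℂ, z ^ m = w ∧ ‖z‖ < 1 := by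
      rcases eq_or_ne w 0 with rfl | hw0
      · exact ⟨0, by simp [zero_pow hm0], by simp⟩
      · refine ⟨w ^ ((m : ℂ)⁻¹), Complex.cpow_nat_inv_pow w hm0, ?_⟩
        have hpow : ‖w ^ ((m : ℂ)⁻¹)‖ ^ m = ‖w‖ := by
          rw [← norm_pow, Complex.cpow_nat_inv_pow w hm0]
        by_contra hge
        push_neg at hge
        have : (1:ℝ) ≤ ‖w ^ ((m : ℂ)⁻¹)‖ ^ m := one_le_pow₀ hge
        rw [hpow] at this; linarith
    have hrot : ∀ j : ℕ, HasSum (fun n => e n * (ω ^ j * z) ^ n) (u (ω ^ j * z)) := by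
      intro j
      refine hasSum_of_series hp ?_
      rw [norm_mul, norm_pow, hωnorm, one_pow, one_mul]
      exact hz1
    have hsumj : HasSum (fun n => ∑ j ∈ Finset.range m, e n * (ω ^ j * z) ^ n)
        (∑ j ∈ Finset.range m, u (ω ^ j * z)) := hasSum_sum fun j _ => hrot j
    have hterm : ∀ n, (∑ j ∈ Finset.range m, e n * (ω ^ j * z) ^ n)
        = (if m ∣ n then (m : ℂ) * (e n * z ^ n) else 0) := by
      intro n
      have hrw : ∀ j, e n * (ω ^ j * z) ^ n = (e n * z ^ n) * ((ω ^ n) ^ j) := by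
        intro j
        rw [mul_pow, ← pow_mul, mul_comm j n, pow_mul]
        ring
      rw [Finset.sum_congr rfl fun j _ => hrw j, ← Finset.mul_sum]
      by_cases hdvd : m ∣ n
      · rw [if_pos hdvd]
        have : ω ^ n = 1 := (hω.pow_eq_one_iff_dvd n).mpr hdvd
        rw [this]
        simp [mul_comm]
      · rw [if_neg hdvd]
        have hne : ω ^ n ≠ 1 := fun hgeq => hdvd ((hω.pow_eq_one_iff_dvd n).mp hgeq)
        rw [geom_sum_eq hne]
        have : (ω ^ n) ^ m = 1 := by rw [← pow_mul, mul_comm, pow_mul, hωm, one_pow]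
        rw [this]
        simp
    have hsumite : HasSum (fun n => if m ∣ n then (m : ℂ) * (e n * z ^ n) else 0)
        (∑ j ∈ Finset.range m, u (ω ^ j * z)) :=
      hsumj.congr_fun fun n => (hterm n).symm
    have hGm : HasSum (fun l => (m : ℂ) * (e (l * m) * w ^ l)) ((m : ℂ) * G w) :=
      (hGsum w hw).mul_left _
    have hinj : Function.Injective fun l : ℕ => l * m := fun x y hxy => by
      exact Nat.eq_of_mul_eq_mul_right (by omega) hxy
    have hvan : ∀ n, n ∉ Set.range (fun l : ℕ => l * m) →
        (if m ∣ n then (m : ℂ) * (e n * z ^ n) else 0) = 0 := by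
      intro n hn
      rw [if_neg]
      intro hdvd
      exact hn ⟨n / m, (Nat.div_mul_cancel hdvd)⟩
    have hcomp : HasSum ((fun n => if m ∣ n then (m : ℂ) * (e n * z ^ n) else 0)
        ∘ fun l : ℕ => l * m) ((m : ℂ) * G w) := by
      refine hGm.congr_fun fun l => ?_
      simp only [Function.comp_apply]
      have hd : m ∣ l * m := dvd_mul_left m l
      rw [if_pos hd, ← hzm, ← pow_mul, mul_comm m l]
    have huniq : HasSum (fun n => if m ∣ n then (m : ℂ) * (e n * z ^ n) else 0)
        ((m : ℂ) * G w) := (hinj.hasSum_iff hvan).mp hcomp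
    have heqsum : (m : ℂ) * G w = ∑ j ∈ Finset.range m, u (ω ^ j * z) :=
      huniq.unique hsumite
    have hnorm : ‖(m : ℂ) * G w‖ ≤ m := by
      rw [heqsum]
      refine le_trans (norm_sum_le _ _) ?_
      have : ∀ j ∈ Finset.range m, ‖u (ω ^ j * z)‖ ≤ 1 := by
        intro j _
        refine hb _ ?_
        rw [norm_mul, norm_pow, hωnorm, one_pow, one_mul]
        exact hz1
      calc (∑ j ∈ Finset.range m, ‖u (ω ^ j * z)‖) ≤ ∑ _j ∈ Finset.range m, (1:ℝ) :=
            Finset.sum_le_sum this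
        _ = m := by simp
    have hmpos : (0:ℝ) < m := by exact_mod_cast Nat.pos_of_ne_zero hm0
    rw [norm_mul, Complex.norm_natCast] at hnorm
    calc ‖G w‖ = ((m:ℝ) * ‖G w‖) / m := by field_simp
      _ ≤ (m:ℝ) / m := by gcongr
      _ = 1 := by field_simp
  -- now the Schwarz--Pick argument at 0
  set a : ℂ := e 0 with ha_def
  have ha1 : ‖a‖ < 1 := h0
  have hG0 : G 0 = a := by
    have h := hGsum 0 (by simp)
    have h' : HasSum (fun l : ℕ => e (l * m) * (0:ℂ) ^ l) (e 0) := by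
      have := hasSum_single (f := fun l : ℕ => e (l * m) * (0:ℂ) ^ l) 0
        (fun l hl => by simp [zero_pow hl])
      simpa using this
    exact (h.unique h')
  have hGd : DifferentiableOn ℂ G (ball (0:ℂ) 1) := by
    intro w hw
    rw [mem_ball, dist_zero_right] at hw
    have hmem : w ∈ Metric.eball (0:ℂ) 1 := by
      have := mem_emetric_of_norm_lt (ρ := 1) (by simpa using hw)
      simpa using this
    exact (hG.differentiableOn w hmem).mono (fun x hx => by
      rw [mem_ball, dist_zero_right] at hx
      have := mem_emetric_of_norm_lt (ρ := 1) (by simpa using hx)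
      simpa using this)
  have hden : ∀ w : ℂ, ‖w‖ < 1 → (1:ℂ) - (starRingEnd ℂ) a * G w ≠ 0 := by
    intro w hw heq
    have h1 : (1:ℂ) = (starRingEnd ℂ) a * G w := by linear_combination heq
    have : (1:ℝ) = ‖(starRingEnd ℂ) a * G w‖ := by rw [← h1, norm_one]
    rw [norm_mul, RCLike.norm_conj] at this
    nlinarith [hGb w hw, norm_nonneg (G w), norm_nonneg a]
  set F : ℂ → ℂ := fun w => (G w - a) / (1 - (starRingEnd ℂ) a * G w) with hF_def
  have hF0 : F 0 = 0 := by rw [hF_def]; simp [hG0]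
  have hFd : DifferentiableOn ℂ F (ball (0:ℂ) 1) := by
    refine DifferentiableOn.div (hGd.sub (differentiableOn_const a))
      ((differentiableOn_const (1:ℂ)).sub ((differentiableOn_const _).mul hGd)) ?_
    intro w hw
    rw [mem_ball, dist_zero_right] at hw
    exact hden w hw
  have hFb : ∀ w : ℂ, ‖w‖ < 1 → ‖F w‖ ≤ 1 := by
    intro w hw
    rw [hF_def]
    simp only [norm_div]
    have hGw := hGb w hw
    have hnum := mobius_bound hGw ha1.le
    rcases eq_or_lt_of_le (norm_nonneg (1 - (starRingEnd ℂ) a * G w)) with hz | hdenpos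
    · exact absurd (norm_eq_zero.mp hz.symm) (hden w hw)
    · rw [div_le_one hdenpos]
      exact hnum
  have hFderiv : ‖deriv F 0‖ ≤ 1 := by
    refine le_of_forall_gt_imp_ge_of_dense fun R hR => ?_
    have hmaps : Set.MapsTo F (ball (0:ℂ) 1) (ball (F 0) R) := by
      intro w hw
      rw [mem_ball, dist_zero_right] at hw
      rw [mem_ball, hF0, dist_zero_right]
      exact lt_of_le_of_lt (hFb w hw) hR
    have h := Complex.norm_deriv_le_div_of_mapsTo_ball hFd (hmaps.mono_right ball_subset_closedBall) one_pos
    simpa using h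
  have hGat : DifferentiableAt ℂ G 0 :=
    hGd.differentiableAt (isOpen_ball.mem_nhds (by simp [mem_ball, dist_zero_right]))
  have hNat : DifferentiableAt ℂ (fun w => G w - a) 0 := hGat.sub_const a
  have hDat : DifferentiableAt ℂ (fun w => (1:ℂ) - (starRingEnd ℂ) a * G w) 0 :=
    (differentiableAt_const _).sub ((differentiableAt_const _).mul hGat)
  have hD0 : (1:ℂ) - (starRingEnd ℂ) a * G 0 ≠ 0 := hden 0 (by simp)
  have hderivF : deriv F 0 = deriv G 0 / (1 - (starRingEnd ℂ) a * G 0) := by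
    have hN0 : G 0 - a = 0 := by rw [hG0]; ring
    rw [hF_def]
    rw [show (fun w => (G w - a) / (1 - (starRingEnd ℂ) a * G w)) = (fun w => G w - a) / (fun w => 1 - (starRingEnd ℂ) a * G w) from rfl, deriv_div hNat hDat hD0]
    rw [hN0, deriv_sub_const, zero_mul, sub_zero, sq,
      mul_div_mul_right _ _ hD0]
  have hderivG : deriv G 0 = e m := by
    have h := hG.hasFPowerSeriesAt.deriv
    rw [h]
    have h2 : (q 1 fun _ => (1:ℂ)) = q.coeff 1 := rfl
    rw [h2, hq_coeff, one_mul]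
  have hval : (1:ℂ) - (starRingEnd ℂ) a * G 0 = (((1:ℝ) - ‖a‖^2 : ℝ) : ℂ) := by
    rw [hG0, mul_comm, Complex.mul_conj]
    have : Complex.normSq a = ‖a‖^2 := by
      rw [Complex.normSq_eq_norm_sq]
    rw [this]
    push_cast
    ring
  have hvalnorm : ‖(1:ℂ) - (starRingEnd ℂ) a * G 0‖ = 1 - ‖a‖^2 := by
    rw [hval, Complex.norm_real, Real.norm_eq_abs, abs_of_nonneg]
    nlinarith [norm_nonneg a]
  have hfinal : ‖e m‖ ≤ 1 - ‖a‖^2 := by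
    have heq : e m = deriv F 0 * ((1:ℂ) - (starRingEnd ℂ) a * G 0) := by
      rw [hderivF, ← hderivG]
      field_simp
    rw [heq, norm_mul, hvalnorm]
    calc ‖deriv F 0‖ * (1 - ‖a‖^2) ≤ 1 * (1 - ‖a‖^2) := by
          refine mul_le_mul_of_nonneg_right hFderiv ?_
          nlinarith [norm_nonneg a]
      _ = 1 - ‖a‖^2 := one_mul _
  exact hfinal



lemma ofScalars_coeff (c : ℕ → ℂ) (l : ℕ) :
    (FormalMultilinearSeries.ofScalars ℂ c).coeff l = c l := by
  have h1 : (FormalMultilinearSeries.ofScalars ℂ c).coeff l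
      = (FormalMultilinearSeries.ofScalars ℂ c l) fun _ => (1:ℂ) := rfl
  rw [h1, FormalMultilinearSeries.ofScalars_apply_eq]
  simp

lemma geom_bound {r : ℝ} (hr0 : 0 ≤ r) (hr : r ≤ 1/3) (n : ℕ) :
    (∑ i ∈ Finset.range n, r ^ (i + 1)) ≤ 1 / 2 := by
  have h3 : (∑ i ∈ Finset.range n, ((1:ℝ)/3) ^ i) ≤ 3/2 := by
    rw [geom_sum_eq (by norm_num)]
    have h1 : (0:ℝ) ≤ ((1:ℝ)/3)^n := by positivity
    have heq : (((1:ℝ)/3)^n - 1)/((1:ℝ)/3 - 1) = (1 - ((1:ℝ)/3)^n) * (3/2) := by ring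
    rw [heq]
    nlinarith
  calc (∑ i ∈ Finset.range n, r ^ (i + 1))
      ≤ ∑ i ∈ Finset.range n, ((1:ℝ)/3) ^ (i + 1) :=
        Finset.sum_le_sum fun i _ => pow_le_pow_left₀ hr0 (by linarith) (i+1)
    _ = (∑ i ∈ Finset.range n, ((1:ℝ)/3) ^ i) * (1/3) := by
        rw [Finset.sum_mul]
        exact Finset.sum_congr rfl fun i _ => (pow_succ _ _)
    _ ≤ (3/2) * (1/3) := by nlinarith
    _ = 1/2 := by norm_num

lemma bohr {u : ℂ → ℂ} {p : FormalMultilinearSeries ℂ ℂ ℂ}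
    (hp : ∀ ρ : ℝ≥0, 0 < ρ → (ρ : ℝ) < 1 → HasFPowerSeriesOnBall u p 0 ρ)
    (hb : ∀ z : ℂ, ‖z‖ < 1 → ‖u z‖ ≤ 1)
    {r : ℝ} (hr0 : 0 ≤ r) (hr : r ≤ 1/3) (N : ℕ) :
    ∑ j ∈ Finset.range N, ‖p.coeff j‖ * r ^ j ≤ 1 := by
  set T := ‖p.coeff 0‖ with hT_def
  have hT0 : 0 ≤ T := norm_nonneg _
  have hT1 : T ≤ 1 := coeff_le hp zero_le_one hb 0
  set S := ∑ j ∈ Finset.range N, ‖p.coeff j‖ * r ^ j with hS_def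
  have hkey : ∀ ε : ℝ, ε ∈ Ioo (0:ℝ) 1 →
      (1 - ε) * S ≤ (1 - ε) * T + (1 - (1 - ε)^2 * T^2) * (1/2) := by
    rintro ε ⟨hε0, hε1⟩
    set δ : ℝ := 1 - ε with hδ_def
    have hδ0 : 0 < δ := by simp only [hδ_def]; linarith
    have hδ1 : δ < 1 := by simp only [hδ_def]; linarith
    set c' : ℕ → ℂ := fun n => ((δ:ℝ):ℂ) * p.coeff n with hc'_def
    set u' : ℂ → ℂ := fun z => ((δ:ℝ):ℂ) * u z with hu'_def
    have hδnorm : ‖((δ:ℝ):ℂ)‖ = δ := by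
      rw [Complex.norm_real, Real.norm_eq_abs, abs_of_pos hδ0]
    have hrep : ∀ z : ℂ, ‖z‖ < 1 → HasSum (fun n => c' n * z ^ n) (u' z) := by
      intro z hz
      have h := (hasSum_of_series hp hz).mul_left ((δ:ℝ):ℂ)
      exact h.congr_fun fun n => by rw [hc'_def]; ring
    have hp' := series_of_rep hrep
    have hcoeff' : ∀ n, (FormalMultilinearSeries.ofScalars ℂ c').coeff n = c' n :=
      ofScalars_coeff c'
    have hb' : ∀ z : ℂ, ‖z‖ < 1 → ‖u' z‖ ≤ 1 := by
      intro z hz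
      rw [hu'_def]
      simp only [norm_mul]
      rw [hδnorm]
      calc δ * ‖u z‖ ≤ 1 * 1 := by
            refine mul_le_mul hδ1.le (hb z hz) (norm_nonneg _) zero_le_one
        _ = 1 := one_mul 1
    have h0' : ‖(FormalMultilinearSeries.ofScalars ℂ c').coeff 0‖ < 1 := by
      rw [hcoeff', hc'_def]
      simp only [norm_mul]
      rw [hδnorm, ← hT_def]
      nlinarith
    have hwf : ∀ m : ℕ, 1 ≤ m → δ * ‖p.coeff m‖ ≤ 1 - δ^2 * T^2 := by
      intro m hm
      have h := wiener hp' hb' h0' hm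
      rw [hcoeff', hcoeff', hc'_def] at h
      simp only [norm_mul] at h
      rw [hδnorm, ← hT_def] at h
      calc δ * ‖p.coeff m‖ ≤ 1 - (δ * T)^2 := h
        _ = 1 - δ^2 * T^2 := by ring
    have hδT0 : 0 ≤ δ * T := mul_nonneg hδ0.le hT0
    have hδT : δ * T ≤ 1 := by nlinarith
    have hδT2 : (δ * T) * (δ * T) ≤ 1 * 1 := mul_le_mul hδT hδT hδT0 zero_le_one
    clear_value δ
    -- now bound the sum
    cases N with
    | zero =>
      have hS0 : S = 0 := by rw [hS_def]; simp
      rw [hS0, mul_zero]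
      nlinarith [hδT, hδT0, hδT2]
    | succ n =>
      have hsplit : S = (∑ i ∈ Finset.range n, ‖p.coeff (i+1)‖ * r ^ (i+1)) + T := by
        rw [hS_def, Finset.sum_range_succ']
        simp [← hT_def]
      rw [hsplit]
      have hterm : ∀ i ∈ Finset.range n,
          δ * (‖p.coeff (i+1)‖ * r ^ (i+1)) ≤ (1 - δ^2 * T^2) * r ^ (i+1) := by
        intro i _
        have h := hwf (i+1) (by omega)
        have hrp : (0:ℝ) ≤ r ^ (i+1) := by positivity
        calc δ * (‖p.coeff (i+1)‖ * r ^ (i+1)) = (δ * ‖p.coeff (i+1)‖) * r ^ (i+1) := by ring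
          _ ≤ (1 - δ^2 * T^2) * r ^ (i+1) := mul_le_mul_of_nonneg_right h hrp
      have hsum : δ * (∑ i ∈ Finset.range n, ‖p.coeff (i+1)‖ * r ^ (i+1))
          ≤ (1 - δ^2 * T^2) * (1/2) := by
        rw [Finset.mul_sum]
        calc (∑ i ∈ Finset.range n, δ * (‖p.coeff (i+1)‖ * r ^ (i+1)))
            ≤ ∑ i ∈ Finset.range n, (1 - δ^2 * T^2) * r ^ (i+1) :=
              Finset.sum_le_sum hterm
          _ = (1 - δ^2 * T^2) * ∑ i ∈ Finset.range n, r ^ (i+1) := by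
              rw [Finset.mul_sum]
          _ ≤ (1 - δ^2 * T^2) * (1/2) := by
              have hnn : (0:ℝ) ≤ 1 - δ^2 * T^2 := by nlinarith [hδT, hδT0, hδT2]
              exact mul_le_mul_of_nonneg_left (geom_bound hr0 hr n) hnn
      have heq : δ * ((∑ i ∈ Finset.range n, ‖p.coeff (i+1)‖ * r ^ (i+1)) + T)
          = δ * (∑ i ∈ Finset.range n, ‖p.coeff (i+1)‖ * r ^ (i+1)) + δ * T := by
        ring
      rw [heq]
      linarith [hsum]
  -- take the limit ε → 0⁺
  have hlim1 : Tendsto (fun ε : ℝ => (1 - ε) * S) (𝓝[>] (0:ℝ)) (𝓝 S) := by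
    have hc : Continuous fun ε : ℝ => (1 - ε) * S :=
      ((continuous_const.sub continuous_id).mul continuous_const)
    have := (hc.tendsto (0:ℝ)).mono_left (nhdsWithin_le_nhds (s := Ioi (0:ℝ)))
    simpa using this
  have hlim2 : Tendsto (fun ε : ℝ => (1 - ε) * T + (1 - (1 - ε)^2 * T^2) * (1/2))
      (𝓝[>] (0:ℝ)) (𝓝 ((1 - 0) * T + (1 - (1 - 0)^2 * T^2) * (1/2))) := by
    have hc : Continuous fun ε : ℝ => (1 - ε) * T + (1 - (1 - ε)^2 * T^2) * (1/2) := by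
      continuity
    exact (hc.tendsto (0:ℝ)).mono_left (nhdsWithin_le_nhds (s := Ioi (0:ℝ)))
  have hle : S ≤ (1 - 0) * T + (1 - (1 - 0)^2 * T^2) * (1/2) := by
    refine le_of_tendsto_of_tendsto hlim1 hlim2 ?_
    filter_upwards [Ioo_mem_nhdsGT_of_mem (show (0:ℝ) ∈ Ico (0:ℝ) 1 by constructor <;> norm_num)]
      with ε hε using hkey ε hε
  calc S ≤ (1 - 0) * T + (1 - (1 - 0)^2 * T^2) * (1/2) := hle
    _ = T + (1 - T^2) / 2 := by ring
    _ ≤ 1 := by nlinarith [sq_nonneg (1 - T)]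



lemma vanish {t : ℂ → ℂ} {c : ℕ → ℂ} {B M : ℝ} {k : ℕ}
    (hB : 0 ≤ B) (hM : 0 ≤ M)
    (hcb : ∀ n, ‖c n‖ ≤ B * 2 ^ n)
    (hrep : ∀ z : ℂ, ‖z‖ < 1 → HasSum (fun n => c n * z ^ n) (t z))
    (hbd : ∀ z : ℂ, ‖z‖ ≤ 1/4 → ‖t z‖ ≤ M * ‖z‖ ^ (k+1)) :
    ∀ m, m ≤ k → c m = 0 := by
  intro m
  induction m using Nat.strong_induction_on with
  | _ m IH =>
    intro hmk
    set C : ℝ := M + B * 2 ^ (m + 2) with hC_def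
    have hC0 : 0 ≤ C := by positivity
    have key : ∀ x : ℝ, 0 < x → x ≤ 1/8 → ‖c m‖ ≤ C * x := by
      intro x hx0 hx8
      set z : ℂ := (x : ℂ) with hz_def
      have hzx : ‖z‖ = x := by
        rw [hz_def, Complex.norm_real, Real.norm_eq_abs, abs_of_pos hx0]
      have hz1 : ‖z‖ < 1 := by rw [hzx]; linarith
      have hs := hrep z hz1
      have hsummable := hs.summable
      have hsplit : (∑ i ∈ Finset.range (m+1), c i * z ^ i) + ∑' i, c (i + (m+1)) * z ^ (i + (m+1))
          = t z := by
        rw [Summable.sum_add_tsum_nat_add (m+1) hsummable, hs.tsum_eq]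
      have hfirst : (∑ i ∈ Finset.range (m+1), c i * z ^ i) = c m * z ^ m := by
        rw [Finset.sum_range_succ]
        have : (∑ i ∈ Finset.range m, c i * z ^ i) = 0 := by
          refine Finset.sum_eq_zero fun i hi => ?_
          rw [Finset.mem_range] at hi
          rw [IH i hi (by omega), zero_mul]
        rw [this, zero_add]
      -- bound on the tail
      set R := ∑' i, c (i + (m+1)) * z ^ (i + (m+1)) with hR_def
      have hRbound : ‖R‖ ≤ (B * 2 ^ (m+1) * x ^ (m+1)) * 2 := by
        have h2x0 : (0:ℝ) ≤ 2 * x := by linarith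
        have h2x1 : 2 * x < 1 := by linarith
        have hgeo : HasSum (fun i : ℕ => (B * 2 ^ (m+1) * x ^ (m+1)) * (2*x) ^ i)
            ((B * 2 ^ (m+1) * x ^ (m+1)) * (1 - 2*x)⁻¹) :=
          (hasSum_geometric_of_lt_one h2x0 h2x1).mul_left _
        have hterm : ∀ i : ℕ, ‖c (i + (m+1)) * z ^ (i + (m+1))‖
            ≤ (B * 2 ^ (m+1) * x ^ (m+1)) * (2*x) ^ i := by
          intro i
          rw [norm_mul, norm_pow, hzx]
          calc ‖c (i + (m+1))‖ * x ^ (i + (m+1))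
              ≤ (B * 2 ^ (i + (m+1))) * x ^ (i + (m+1)) := by
                refine mul_le_mul_of_nonneg_right (hcb _) (by positivity)
            _ = (B * 2 ^ (m+1) * x ^ (m+1)) * (2*x) ^ i := by
                rw [pow_add, pow_add, mul_pow]
                ring
        have h1 := tsum_of_norm_bounded hgeo hterm
        refine le_trans h1 ?_
        have hinv : (1 - 2*x)⁻¹ ≤ 2 := by
          rw [inv_le_comm₀ (by linarith) (by norm_num)]
          linarith
        exact mul_le_mul_of_nonneg_left hinv (by positivity)
      -- combine
      have hcm : c m * z ^ m = t z - R := by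
        rw [← hsplit, hfirst]; ring
      have hnorm : ‖c m‖ * x ^ m ≤ M * x ^ (k+1) + (B * 2 ^ (m+1) * x ^ (m+1)) * 2 := by
        have h1 : ‖c m * z ^ m‖ = ‖c m‖ * x ^ m := by rw [norm_mul, norm_pow, hzx]
        rw [← h1, hcm]
        refine le_trans (norm_sub_le _ _) ?_
        have h2 : ‖t z‖ ≤ M * x ^ (k+1) := by
          have := hbd z (by rw [hzx]; linarith)
          rwa [hzx] at this
        linarith [hRbound]
      have hxk : x ^ (k+1) ≤ x ^ (m+1) :=
        pow_le_pow_of_le_one hx0.le (by linarith) (by omega)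
      have hfin : ‖c m‖ * x ^ m ≤ C * x * x ^ m := by
        calc ‖c m‖ * x ^ m ≤ M * x ^ (k+1) + (B * 2 ^ (m+1) * x ^ (m+1)) * 2 := hnorm
          _ ≤ M * x ^ (m+1) + (B * 2 ^ (m+1) * x ^ (m+1)) * 2 := by
              have := mul_le_mul_of_nonneg_left hxk hM
              linarith
          _ = C * x * x ^ m := by
              rw [hC_def]
              ring
      have hxm : (0:ℝ) < x ^ m := by positivity
      exact le_of_mul_le_mul_right (by linarith [hfin]) hxm
    have hle : ‖c m‖ ≤ 0 := by
      refine le_of_forall_pos_le_add fun ε hε => ?_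
      rw [zero_add]
      set x : ℝ := min (1/8) (ε / (C + 1)) with hx_def
      have hx0 : 0 < x := by
        rw [hx_def]
        refine lt_min (by norm_num) (by positivity)
      have hx8 : x ≤ 1/8 := min_le_left _ _
      calc ‖c m‖ ≤ C * x := key x hx0 hx8
        _ ≤ C * (ε / (C + 1)) := by
            refine mul_le_mul_of_nonneg_left (min_le_right _ _) hC0
        _ ≤ ε := by
            rw [div_eq_mul_inv]
            rw [show C * (ε * (C+1)⁻¹) = (C / (C+1)) * ε by field_simp]
            have : C / (C + 1) ≤ 1 := by
              rw [div_le_one (by linarith)]; linarith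
            nlinarith
    exact norm_le_zero_iff.mp hle


lemma exists_two_bound {c : ℕ → ℂ} {u : ℂ → ℂ}
    (hc : ∀ z : ℂ, ‖z‖ < 1 → HasSum (fun n => c n * z ^ n) (u z)) :
    ∃ B : ℝ, 0 ≤ B ∧ ∀ n, ‖c n‖ ≤ B * 2 ^ n := by
  obtain ⟨C, hC0, hC⟩ := exists_bound_at hc (t := 1/2) (by norm_num) (by norm_num)
  refine ⟨C, hC0, fun n => ?_⟩
  have h := hC n
  have h2 : ((1:ℝ)/2) ^ n * 2 ^ n = 1 := by
    rw [← mul_pow]; norm_num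
  calc ‖c n‖ = ‖c n‖ * (((1:ℝ)/2) ^ n * 2 ^ n) := by rw [h2, mul_one]
    _ = (‖c n‖ * ((1:ℝ)/2) ^ n) * 2 ^ n := by ring
    _ ≤ C * 2 ^ n := by
        refine mul_le_mul_of_nonneg_right h (by positivity)


end BohrAux

open BohrAux in
/-- Bohr-type inequality for sections under subordination: if `f ≺ h`, then
`M_r(s_k(f)) ≤ M_r(s_k(h))` for `0 ≤ r ≤ 1/3`. -/
theorem bohr_section_subordination (f h φ : ℂ → ℂ) (a b : ℕ → ℂ)
    (hf : ∀ z : ℂ, ‖z‖ < 1 → HasSum (fun n => a n * z ^ n) (f z))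
    (hh : ∀ z : ℂ, ‖z‖ < 1 → HasSum (fun n => b n * z ^ n) (h z))
    (hφ0 : φ 0 = 0)
    (hφb : ∀ z : ℂ, ‖z‖ < 1 → ‖φ z‖ ≤ 1)
    (hφa : AnalyticOnNhd ℂ φ (Metric.ball (0 : ℂ) 1))
    (hsub : ∀ z : ℂ, ‖z‖ < 1 → f z = h (φ z))
    (k : ℕ) (r : ℝ) (hr0 : 0 ≤ r) (hr : r ≤ 1 / 3) :
    ∑ n ∈ Finset.range (k + 1), ‖a n‖ * r ^ n ≤
      ∑ n ∈ Finset.range (k + 1), ‖b n‖ * r ^ n := by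
  have hφd : DifferentiableOn ℂ φ (ball (0:ℂ) 1) := fun z hz =>
    (hφa z hz).differentiableAt.differentiableWithinAt
  set ψ : ℂ → ℂ := dslope φ 0 with hψ_def
  have hψd : DifferentiableOn ℂ ψ (ball (0:ℂ) 1) :=
    (Complex.differentiableOn_dslope (ball_mem_nhds 0 one_pos)).mpr hφd
  have hψb : ∀ z : ℂ, ‖z‖ < 1 → ‖ψ z‖ ≤ 1 := by
    intro z hz
    refine le_of_forall_gt_imp_ge_of_dense fun R hR => ?_
    have hmaps : Set.MapsTo φ (ball (0:ℂ) 1) (ball (φ 0) R) := by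
      intro w hw
      rw [mem_ball, dist_zero_right] at hw
      rw [mem_ball, hφ0, dist_zero_right]
      exact lt_of_le_of_lt (hφb w hw) hR
    have := Complex.norm_dslope_le_div_of_mapsTo_ball hφd (hmaps.mono_right ball_subset_closedBall) (mem_ball_zero_iff.mpr hz)
    simpa using this
  have hφψ : ∀ z : ℂ, φ z = z * ψ z := by
    intro z
    rcases eq_or_ne z 0 with rfl | hz
    · rw [hφ0, zero_mul]
    · rw [hψ_def, dslope_of_ne _ hz, slope_def_field, hφ0, sub_zero, sub_zero]
      field_simp
  have hφle : ∀ z : ℂ, ‖z‖ < 1 → ‖φ z‖ ≤ ‖z‖ := by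
    intro z hz
    rw [hφψ z, norm_mul]
    calc ‖z‖ * ‖ψ z‖ ≤ ‖z‖ * 1 := mul_le_mul_of_nonneg_left (hψb z hz) (norm_nonneg z)
      _ = ‖z‖ := mul_one _
  -- power series of the powers of ψ
  have hund : ∀ n : ℕ, DifferentiableOn ℂ (fun z => ψ z ^ n) (ball (0:ℂ) 1) :=
    fun n => hψd.pow n
  have hunb : ∀ n : ℕ, ∀ z : ℂ, ‖z‖ < 1 → ‖ψ z ^ n‖ ≤ 1 := fun n z hz => by
    rw [norm_pow]; exact pow_le_one₀ (norm_nonneg _) (hψb z hz)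
  choose Q hQ using fun n : ℕ => exists_series (hund n)
  have hQb : ∀ n j, ‖(Q n).coeff j‖ ≤ 1 := fun n j => coeff_le (hQ n) zero_le_one (hunb n) j
  have hQbohr : ∀ n N, (∑ j ∈ Finset.range N, ‖(Q n).coeff j‖ * r ^ j) ≤ 1 :=
    fun n N => bohr (hQ n) (hunb n) hr0 hr N
  -- coefficients of φ ^ n
  set D : ℕ → ℕ → ℂ := fun n i => if i < n then 0 else (Q n).coeff (i - n) with hD_def
  have hDrep : ∀ n, ∀ z : ℂ, ‖z‖ < 1 → HasSum (fun i => D n i * z ^ i) ((φ z) ^ n) := by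
    intro n z hz
    have h1 : HasSum (fun j => (Q n).coeff j * z ^ j) (ψ z ^ n) := hasSum_of_series (hQ n) hz
    have h2 : HasSum (fun j => ((Q n).coeff j * z ^ j) * z ^ n) (ψ z ^ n * z ^ n) :=
      h1.mul_right _
    have h3 : ∀ j, D n (j + n) * z ^ (j + n) = ((Q n).coeff j * z ^ j) * z ^ n := by
      intro j
      rw [hD_def]
      simp only
      rw [if_neg (by omega), Nat.add_sub_cancel, pow_add]
      ring
    have h4 : HasSum (fun j => D n (j + n) * z ^ (j + n)) (ψ z ^ n * z ^ n) :=
      h2.congr_fun fun j => h3 j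
    have h5 := (hasSum_nat_add_iff (f := fun i => D n i * z ^ i) n).mp h4
    have h6 : (∑ i ∈ Finset.range n, D n i * z ^ i) = 0 := by
      refine Finset.sum_eq_zero fun i hi => ?_
      rw [hD_def]
      simp only
      rw [if_pos (Finset.mem_range.mp hi), zero_mul]
    rw [h6, add_zero] at h5
    have h7 : (φ z) ^ n = ψ z ^ n * z ^ n := by rw [hφψ z, mul_pow]; ring
    rw [h7]
    exact h5
  -- coefficient bounds
  obtain ⟨B, hB0, hBb⟩ := exists_two_bound hh
  obtain ⟨A, hA0, hAb⟩ := exists_two_bound hf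
  have hDb : ∀ n i, ‖D n i‖ ≤ 1 := by
    intro n i
    rw [hD_def]
    simp only
    split
    · simp
    · exact hQb n (i - n)
  -- the tail function and its coefficients
  set c : ℕ → ℂ := fun i => a i - ∑ n ∈ Finset.range (k+1), b n * D n i with hc_def
  set t : ℂ → ℂ := fun z => f z - ∑ n ∈ Finset.range (k+1), b n * (φ z) ^ n with ht_def
  have hcrep : ∀ z : ℂ, ‖z‖ < 1 → HasSum (fun i => c i * z ^ i) (t z) := by
    intro z hz
    have hsumn : HasSum (fun i => ∑ n ∈ Finset.range (k+1), b n * (D n i * z ^ i))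
        (∑ n ∈ Finset.range (k+1), b n * (φ z) ^ n) :=
      hasSum_sum fun n _ => (hDrep n z hz).mul_left (b n)
    have hres := (hf z hz).sub hsumn
    refine hres.congr_fun fun i => ?_
    rw [hc_def]
    simp only
    rw [sub_mul, Finset.sum_mul]
    congr 1
    exact Finset.sum_congr rfl fun n _ => by ring
  have hcb : ∀ i, ‖c i‖ ≤ (A + ∑ n ∈ Finset.range (k+1), ‖b n‖) * 2 ^ i := by
    intro i
    have h1 : ‖c i‖ ≤ ‖a i‖ + ‖∑ n ∈ Finset.range (k+1), b n * D n i‖ := norm_sub_le _ _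
    have h2 : ‖∑ n ∈ Finset.range (k+1), b n * D n i‖ ≤ ∑ n ∈ Finset.range (k+1), ‖b n‖ := by
      refine le_trans (norm_sum_le _ _) (Finset.sum_le_sum fun n _ => ?_)
      rw [norm_mul]
      calc ‖b n‖ * ‖D n i‖ ≤ ‖b n‖ * 1 :=
            mul_le_mul_of_nonneg_left (hDb n i) (norm_nonneg _)
        _ = ‖b n‖ := mul_one _
    have h3 : (1:ℝ) ≤ 2 ^ i := one_le_pow₀ (by norm_num)
    have h4 : (0:ℝ) ≤ ∑ n ∈ Finset.range (k+1), ‖b n‖ :=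
      Finset.sum_nonneg fun n _ => norm_nonneg _
    calc ‖c i‖ ≤ ‖a i‖ + ∑ n ∈ Finset.range (k+1), ‖b n‖ := by linarith
      _ ≤ A * 2 ^ i + (∑ n ∈ Finset.range (k+1), ‖b n‖) * 2 ^ i := by
          have := hAb i
          nlinarith
      _ = (A + ∑ n ∈ Finset.range (k+1), ‖b n‖) * 2 ^ i := by ring
  have htb : ∀ z : ℂ, ‖z‖ ≤ 1/4 → ‖t z‖ ≤ (B * 2 ^ (k+2)) * ‖z‖ ^ (k+1) := by
    intro z hz4
    have hz1 : ‖z‖ < 1 := by linarith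
    have hw1 : ‖φ z‖ ≤ ‖z‖ := hφle z hz1
    have hw4 : ‖φ z‖ ≤ 1/4 := le_trans hw1 hz4
    have hwlt : ‖φ z‖ < 1 := by linarith
    have hhsum := hh (φ z) hwlt
    have hsummable := hhsum.summable
    have hsplit := Summable.sum_add_tsum_nat_add (f := fun n => b n * (φ z) ^ n) (k+1) hsummable
    have htz : t z = ∑' j, b (j + (k+1)) * (φ z) ^ (j + (k+1)) := by
      rw [ht_def]
      simp only
      rw [hsub z hz1, ← hhsum.tsum_eq, ← hsplit]
      ring
    rw [htz]
    have hDm0 : (0:ℝ) ≤ B * 2 ^ (k+1) * ‖φ z‖ ^ (k+1) := by positivity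
    have hgeo : HasSum (fun j : ℕ => (B * 2 ^ (k+1) * ‖φ z‖ ^ (k+1)) * ((1:ℝ)/2) ^ j)
        ((B * 2 ^ (k+1) * ‖φ z‖ ^ (k+1)) * (1 - 1/2)⁻¹) :=
      (hasSum_geometric_of_lt_one (by norm_num) (by norm_num)).mul_left _
    have hterm : ∀ j : ℕ, ‖b (j + (k+1)) * (φ z) ^ (j + (k+1))‖
        ≤ (B * 2 ^ (k+1) * ‖φ z‖ ^ (k+1)) * ((1:ℝ)/2) ^ j := by
      intro j
      rw [norm_mul, norm_pow]
      have hb1 : ‖b (j + (k+1))‖ ≤ B * 2 ^ (j + (k+1)) := hBb _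
      have h2w : (2 * ‖φ z‖) ^ j ≤ ((1:ℝ)/2) ^ j := by
        refine pow_le_pow_left₀ (by positivity) (by linarith) j
      calc ‖b (j + (k+1))‖ * ‖φ z‖ ^ (j + (k+1))
          ≤ (B * 2 ^ (j + (k+1))) * ‖φ z‖ ^ (j + (k+1)) := by
            refine mul_le_mul_of_nonneg_right hb1 (by positivity)
        _ = (B * 2 ^ (k+1) * ‖φ z‖ ^ (k+1)) * (2 * ‖φ z‖) ^ j := by
            rw [pow_add, pow_add, mul_pow]
            ring
        _ ≤ (B * 2 ^ (k+1) * ‖φ z‖ ^ (k+1)) * ((1:ℝ)/2) ^ j :=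
            mul_le_mul_of_nonneg_left h2w hDm0
    have h1 := tsum_of_norm_bounded hgeo hterm
    refine le_trans h1 ?_
    have heq : (B * 2 ^ (k+1) * ‖φ z‖ ^ (k+1)) * ((1:ℝ) - 1/2)⁻¹
        = B * 2 ^ (k+2) * ‖φ z‖ ^ (k+1) := by
      norm_num
      ring
    rw [heq]
    have hpw : ‖φ z‖ ^ (k+1) ≤ ‖z‖ ^ (k+1) := pow_le_pow_left₀ (norm_nonneg _) hw1 _
    calc B * 2 ^ (k+2) * ‖φ z‖ ^ (k+1) ≤ B * 2 ^ (k+2) * ‖z‖ ^ (k+1) := by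
          refine mul_le_mul_of_nonneg_left hpw (by positivity)
      _ = (B * 2 ^ (k+2)) * ‖z‖ ^ (k+1) := by ring
  -- the low coefficients of t vanish
  have hvan := vanish (t := t) (c := c)
    (B := A + ∑ n ∈ Finset.range (k+1), ‖b n‖) (M := B * 2 ^ (k+2))
    (by positivity) (by positivity) hcb hcrep htb
  have haD : ∀ i, i ≤ k → a i = ∑ n ∈ Finset.range (k+1), b n * D n i := by
    intro i hik
    have h := hvan i hik
    rw [hc_def] at h
    simp only at h
    exact sub_eq_zero.mp h
  -- final chain of inequalities
  calc ∑ i ∈ Finset.range (k+1), ‖a i‖ * r ^ i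
      ≤ ∑ i ∈ Finset.range (k+1), ∑ n ∈ Finset.range (k+1), ‖b n‖ * ‖D n i‖ * r ^ i := by
        refine Finset.sum_le_sum fun i hi => ?_
        rw [haD i (by have := Finset.mem_range.mp hi; omega)]
        calc ‖∑ n ∈ Finset.range (k+1), b n * D n i‖ * r ^ i
            ≤ (∑ n ∈ Finset.range (k+1), ‖b n * D n i‖) * r ^ i :=
              mul_le_mul_of_nonneg_right (norm_sum_le _ _) (by positivity)
          _ = ∑ n ∈ Finset.range (k+1), ‖b n‖ * ‖D n i‖ * r ^ i := by
              rw [Finset.sum_mul]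
              exact Finset.sum_congr rfl fun n _ => by rw [norm_mul]
    _ = ∑ n ∈ Finset.range (k+1), ∑ i ∈ Finset.range (k+1), ‖b n‖ * ‖D n i‖ * r ^ i :=
        Finset.sum_comm
    _ ≤ ∑ n ∈ Finset.range (k+1), ‖b n‖ * r ^ n := by
        refine Finset.sum_le_sum fun n hn => ?_
        have hnk : n ≤ k := by have := Finset.mem_range.mp hn; omega
        rw [Finset.sum_congr rfl fun i (_ : i ∈ Finset.range (k+1)) =>
          (show ‖b n‖ * ‖D n i‖ * r ^ i = ‖b n‖ * (‖D n i‖ * r ^ i) by ring), ← Finset.mul_sum]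
        refine mul_le_mul_of_nonneg_left ?_ (norm_nonneg _)
        have hsplit : (∑ i ∈ Finset.range (k+1), ‖D n i‖ * r ^ i)
            = ∑ i ∈ Finset.Ico n (k+1), ‖D n i‖ * r ^ i := by
          rw [Finset.range_eq_Ico, ← Finset.sum_Ico_consecutive _ (Nat.zero_le n) (by omega)]
          have hz : (∑ i ∈ Finset.Ico 0 n, ‖D n i‖ * r ^ i) = 0 := by
            refine Finset.sum_eq_zero fun i hi => ?_
            have hin : i < n := (Finset.mem_Ico.mp hi).2
            rw [hD_def]
            simp only
            rw [if_pos hin]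
            simp
          rw [hz, zero_add]
        rw [hsplit, Finset.sum_Ico_eq_sum_range]
        have hterm2 : ∀ j, ‖D n (n + j)‖ * r ^ (n + j) = (‖(Q n).coeff j‖ * r ^ j) * r ^ n := by
          intro j
          rw [hD_def]
          simp only
          rw [if_neg (by omega), Nat.add_sub_cancel_left, pow_add]
          ring
        rw [Finset.sum_congr rfl fun j _ => hterm2 j, ← Finset.sum_mul]
        calc (∑ j ∈ Finset.range (k+1-n), ‖(Q n).coeff j‖ * r ^ j) * r ^ n ≤ 1 * r ^ n :=
              mul_le_mul_of_nonneg_right (hQbohr n _) (by positivity)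
          _ = r ^ n := one_mul _

end
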